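/- For all σ₁, σ₂ ∈ {±s}, the product G₂(σ₁,σ₂)(u,v) defined in the context is a symmetric function of (u,v); consequently, by induction together with the reduction steps, G_N(σ₁,...,σ_N)(u,v) is symmetric in (u,v) for every N ≥ 1 and every choice of σ_i ∈ {±s}. -/

import Mathlib

open Finset

/-- `G_N(σ)(u,v) = e^{−2λs∑σ_k} ∏_{k=1}^{N} ∏_{j'} ( e^{(σ_k/(2s))(v−u)}
  + e^{(σ_k/(2s))(u−v) + 2j'λ + 2λ(∑_{i>k} σ_i − ∑_{i<k} σ_i)} )`,
where `j'` ranges over `−s+1/2, …, s−1/2` (here `j' = m+1−s−1/2`, `m ∈ {0,…,2s−1}`)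
and `s2 = 2s`. -/
noncomputable def Gn (s2 : ℕ) (lam : ℂ) (N : ℕ) (σ : Fin N → ℂ) (u v : ℂ) : ℂ :=
  Complex.exp (-lam * (s2 : ℂ) * ∑ k, σ k) *
    ∏ k : Fin N, ∏ m ∈ range s2,
      (Complex.exp ((σ k / (s2 : ℂ)) * (v - u))
        + Complex.exp ((σ k / (s2 : ℂ)) * (u - v)
            + 2 * lam * (((m : ℂ) + 1) - (s2 : ℂ) / 2 - 1 / 2)
            + 2 * lam * ((∑ i ∈ Finset.Ioi k, σ i) - ∑ i ∈ Finset.Iio k, σ i)))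

namespace GnAux

/-- A single factor of the double product. -/
noncomputable def fac (s2 : ℕ) (lam u v x d : ℂ) (m : ℕ) : ℂ :=
  Complex.exp ((x / (s2 : ℂ)) * (v - u))
    + Complex.exp ((x / (s2 : ℂ)) * (u - v)
        + 2 * lam * (((m : ℂ) + 1) - (s2 : ℂ) / 2 - 1 / 2)
        + 2 * lam * d)

/-- The block of `s2` factors associated to one spin. -/
noncomputable def F (s2 : ℕ) (lam u v x d : ℂ) : ℂ :=
  ∏ m ∈ range s2, fac s2 lam u v x d m

lemma sum_range_cast (n : ℕ) : ∑ m ∈ range n, (m : ℂ) = n * (n - 1) / 2 := by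
  induction n with
  | zero => simp
  | succ n ih => rw [Finset.sum_range_succ, ih]; push_cast; ring

lemma fac_swap (s2 : ℕ) (lam u v x d : ℂ) (m : ℕ) :
    fac s2 lam v u x d m = fac s2 lam u v (-x) d m := by
  unfold fac
  congr 1 <;> exact congrArg Complex.exp (by ring)

lemma fac_neg (s2 : ℕ) (lam u v x d : ℂ) (m : ℕ) (hm : m < s2) :
    fac s2 lam u v (-x) d m
      = Complex.exp (2 * lam * (((m : ℂ) + 1) - (s2 : ℂ) / 2 - 1 / 2) + 2 * lam * d)
        * fac s2 lam u v x (-d) (s2 - 1 - m) := by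
  have hc : ((s2 - 1 - m : ℕ) : ℂ) = (s2 : ℂ) - 1 - (m : ℂ) := by
    rw [Nat.cast_sub (by omega), Nat.cast_sub (by omega), Nat.cast_one]
  unfold fac
  rw [hc, mul_add, ← Complex.exp_add, ← Complex.exp_add]
  refine (add_comm _ _).trans ?_
  congr 1 <;> exact congrArg Complex.exp (by ring)

lemma F_swap (s2 : ℕ) (lam u v x d : ℂ) :
    F s2 lam v u x d = F s2 lam u v (-x) d :=
  Finset.prod_congr rfl fun m _ => fac_swap s2 lam u v x d m

lemma F_neg (s2 : ℕ) (lam u v x d : ℂ) :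
    F s2 lam u v (-x) d = Complex.exp (2 * lam * (s2 : ℂ) * d) * F s2 lam u v x (-d) := by
  unfold F
  rw [← Finset.prod_range_reflect (fun m => fac s2 lam u v x (-d) m) s2]
  rw [Finset.prod_congr rfl (fun m hm => fac_neg s2 lam u v x d m (Finset.mem_range.mp hm))]
  rw [Finset.prod_mul_distrib, ← Complex.exp_sum]
  congr 2
  have hcg : ∀ m ∈ range s2, 2 * lam * (((m : ℂ) + 1) - (s2 : ℂ) / 2 - 1 / 2) + 2 * lam * d
      = 2 * lam * (m : ℂ) + (2 * lam * (1 - (s2 : ℂ) / 2 - 1 / 2) + 2 * lam * d) :=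
    fun m _ => by ring
  rw [Finset.sum_congr rfl hcg]
  rw [Finset.sum_add_distrib, Finset.sum_const, Finset.card_range, ← Finset.mul_sum,
    sum_range_cast, nsmul_eq_mul]
  ring

/-- Recursive product over a list; `a` is the sum of the spins before the list,
`b` the sum of the spins after it. -/
noncomputable def lp (Φ : ℂ → ℂ → ℂ) : ℂ → ℂ → List ℂ → ℂ
  | _, _, [] => 1
  | a, b, x :: l => Φ x (b + l.sum - a) * lp Φ (a + x) b l

lemma lp_append (Φ : ℂ → ℂ → ℂ) (l₁ : List ℂ) :
    ∀ (l₂ : List ℂ) (a b : ℂ),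
    lp Φ a b (l₁ ++ l₂) = lp Φ a (b + l₂.sum) l₁ * lp Φ (a + l₁.sum) b l₂ := by
  induction l₁ with
  | nil => intro l₂ a b; simp [lp]
  | cons x t ih =>
    intro l₂ a b
    simp only [List.cons_append, lp, List.append_eq, List.sum_append, List.sum_cons, ih]
    rw [show b + (t.sum + l₂.sum) - a = b + l₂.sum + t.sum - a from by ring,
      show a + x + t.sum = a + (x + t.sum) from by ring, mul_assoc]

lemma sum_Iio_succ {n : ℕ} (i : Fin n) (f : Fin (n + 1) → ℂ) :
    ∑ j ∈ Iio i.succ, f j = f 0 + ∑ j ∈ Iio i, f j.succ := by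
  have h : (Iio i.succ : Finset (Fin (n + 1))) = insert 0 ((Iio i).map (Fin.succEmb n)) := by
    ext j
    induction j using Fin.cases with
    | zero => simp [Fin.succ_pos]
    | succ k => simp [Fin.succ_lt_succ_iff, Fin.succ_ne_zero]
  rw [h, Finset.sum_insert, Finset.sum_map]
  · rfl
  · simp [Fin.succ_ne_zero, eq_comm]

lemma lp_ofFn (Φ : ℂ → ℂ → ℂ) :
    ∀ (N : ℕ) (σ : Fin N → ℂ) (a b : ℂ),
    lp Φ a b (List.ofFn σ)
      = ∏ k : Fin N, Φ (σ k) (b + (∑ i ∈ Ioi k, σ i) - a - ∑ i ∈ Iio k, σ i) := by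
  intro N
  induction N with
  | zero => intro σ a b; simp [lp]
  | succ n ih =>
    intro σ a b
    rw [List.ofFn_succ, Fin.prod_univ_succ]
    show Φ (σ 0) (b + (List.ofFn fun i => σ i.succ).sum - a) *
        lp Φ (a + σ 0) b (List.ofFn fun i => σ i.succ) = _
    rw [ih]
    congr 1
    · exact congrArg (Φ (σ 0)) (by
        rw [Fin.sum_Ioi_zero, List.sum_ofFn,
          show (Iio (0 : Fin (n + 1))) = ∅ from by ext j; simp [Fin.pos_iff_ne_zero]]
        simp)
    · refine Finset.prod_congr rfl fun i _ => ?_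
      exact congrArg (Φ (σ i.succ)) (by
        rw [Fin.sum_Ioi_succ, sum_Iio_succ]
        ring)

lemma lp_reduce (Φ : ℂ → ℂ → ℂ) (l₁ l₂ : List ℂ) (x a b : ℂ) :
    lp Φ a b (l₁ ++ x :: -x :: l₂) =
      (Φ x (b + l₂.sum - a - l₁.sum - x) * Φ (-x) (b + l₂.sum - a - l₁.sum - x))
        * lp Φ a b (l₁ ++ l₂) := by
  rw [lp_append, lp_append]
  simp only [lp, List.sum_cons]
  rw [show b + (x + (-x + l₂.sum)) = b + l₂.sum from by ring,
    show b + (-x + l₂.sum) - (a + l₁.sum) = b + l₂.sum - a - l₁.sum - x from by ring,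
    show b + l₂.sum - (a + l₁.sum + x) = b + l₂.sum - a - l₁.sum - x from by ring,
    show a + l₁.sum + x + -x = a + l₁.sum from by ring]
  ring

lemma exists_adj (l : List ℂ) (h : ¬ ∀ x ∈ l, ∀ y ∈ l, x = y) :
    ∃ (l₁ : List ℂ) (x y : ℂ) (l₂ : List ℂ), l = l₁ ++ x :: y :: l₂ ∧ x ≠ y := by
  induction l with
  | nil => exact absurd (by simp) h
  | cons x t ih =>
    cases t with
    | nil =>
      refine absurd ?_ h
      intro a ha b hb
      simp only [List.mem_singleton] at ha hb
      rw [ha, hb]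
    | cons y t' =>
      by_cases hxy : x = y
      · have h' : ¬ ∀ a ∈ y :: t', ∀ b ∈ y :: t', a = b := by
          intro hc
          apply h
          intro a ha b hb
          rcases List.mem_cons.mp ha with ha0 | ha1 <;>
            rcases List.mem_cons.mp hb with hb0 | hb1
          · rw [ha0, hb0]
          · rw [ha0, hxy]; exact hc y List.mem_cons_self b hb1
          · rw [hb0, hxy]; exact (hc y List.mem_cons_self a ha1).symm
          · exact hc a ha1 b hb1
        obtain ⟨l₁, p, q, l₂, heq, hne⟩ := ih h'
        exact ⟨x :: l₁, p, q, l₂, by rw [List.cons_append, ← heq], hne⟩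
      · exact ⟨[], x, y, t', rfl, hxy⟩

lemma lp_replicate (Φ : ℂ → ℂ → ℂ) (c : ℂ) :
    ∀ (n : ℕ) (a b : ℂ),
    lp Φ a b (List.replicate n c)
      = ∏ k ∈ range n, Φ c (b - a + c * ((n : ℂ) - 1 - 2 * (k : ℂ))) := by
  intro n
  induction n with
  | zero => intro a b; simp [lp]
  | succ n ih =>
    intro a b
    rw [List.replicate_succ]
    show Φ c (b + (List.replicate n c).sum - a) * lp Φ (a + c) b (List.replicate n c) = _
    rw [List.sum_replicate, nsmul_eq_mul, ih, Finset.prod_range_succ']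
    rw [mul_comm]
    congr 1
    · refine Finset.prod_congr rfl fun k _ => ?_
      exact congrArg (Φ c) (by push_cast; ring)
    · exact congrArg (Φ c) (by push_cast; ring)

lemma core_replicate (s2 : ℕ) (lam u v c : ℂ) (n : ℕ) (a : ℂ) :
    lp (fun x d => F s2 lam u v (-x) d) a a (List.replicate n c)
      = lp (fun x d => F s2 lam u v x d) a a (List.replicate n c) := by
  rw [lp_replicate, lp_replicate]
  have harg : ∀ k : ℕ, a - a + c * ((n : ℂ) - 1 - 2 * (k : ℂ))
      = c * ((n : ℂ) - 1 - 2 * (k : ℂ)) := fun k => by ring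
  calc
    (∏ k ∈ range n, F s2 lam u v (-c) (a - a + c * ((n : ℂ) - 1 - 2 * (k : ℂ))))
        = ∏ k ∈ range n,
          (Complex.exp (2 * lam * (s2 : ℂ) * (c * ((n : ℂ) - 1 - 2 * (k : ℂ))))
            * F s2 lam u v c (-(c * ((n : ℂ) - 1 - 2 * (k : ℂ))))) := by
          refine Finset.prod_congr rfl fun k _ => ?_
          rw [harg k]
          exact F_neg s2 lam u v c _
    _ = Complex.exp (∑ k ∈ range n, 2 * lam * (s2 : ℂ) * (c * ((n : ℂ) - 1 - 2 * (k : ℂ))))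
          * ∏ k ∈ range n, F s2 lam u v c (-(c * ((n : ℂ) - 1 - 2 * (k : ℂ)))) := by
          rw [Finset.prod_mul_distrib, Complex.exp_sum]
    _ = ∏ k ∈ range n, F s2 lam u v c (-(c * ((n : ℂ) - 1 - 2 * (k : ℂ)))) := by
          have hcg : ∀ k ∈ range n, 2 * lam * (s2 : ℂ) * (c * ((n : ℂ) - 1 - 2 * (k : ℂ)))
              = (2 * lam * (s2 : ℂ) * c * ((n : ℂ) - 1)) - (4 * lam * (s2 : ℂ) * c) * (k : ℂ) :=
            fun k _ => by ring
          rw [Finset.sum_congr rfl hcg]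
          rw [Finset.sum_sub_distrib, Finset.sum_const, Finset.card_range, ← Finset.mul_sum,
            sum_range_cast, nsmul_eq_mul]
          rw [show (n : ℂ) * (2 * lam * (s2 : ℂ) * c * ((n : ℂ) - 1))
              - 4 * lam * (s2 : ℂ) * c * ((n : ℂ) * ((n : ℂ) - 1) / 2) = 0 from by ring]
          simp
    _ = ∏ k ∈ range n, F s2 lam u v c (c * ((n : ℂ) - 1 - 2 * (k : ℂ))) := by
          rw [← Finset.prod_range_reflect
            (fun k => F s2 lam u v c (c * ((n : ℂ) - 1 - 2 * (k : ℂ)))) n]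
          refine Finset.prod_congr rfl fun k hk => ?_
          have hk' := Finset.mem_range.mp hk
          refine congrArg (F s2 lam u v c) ?_
          have hc : ((n - 1 - k : ℕ) : ℂ) = (n : ℂ) - 1 - (k : ℂ) := by
            rw [Nat.cast_sub (by omega), Nat.cast_sub (by omega), Nat.cast_one]
          rw [hc]; ring
    _ = ∏ k ∈ range n, F s2 lam u v c (a - a + c * ((n : ℂ) - 1 - 2 * (k : ℂ))) := by
          refine Finset.prod_congr rfl fun k _ => ?_
          rw [harg k]

lemma core (s2 : ℕ) (lam u v : ℂ) :
    ∀ (l : List ℂ), (∀ x ∈ l, x = (s2 : ℂ) / 2 ∨ x = -((s2 : ℂ) / 2)) → ∀ a : ℂ,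
      lp (fun x d => F s2 lam u v (-x) d) a a l
        = lp (fun x d => F s2 lam u v x d) a a l := by
  suffices H : ∀ (n : ℕ) (l : List ℂ), l.length ≤ n →
      (∀ x ∈ l, x = (s2 : ℂ) / 2 ∨ x = -((s2 : ℂ) / 2)) → ∀ a : ℂ,
      lp (fun x d => F s2 lam u v (-x) d) a a l
        = lp (fun x d => F s2 lam u v x d) a a l by
    exact fun l hmem a => H l.length l le_rfl hmem a
  intro n
  induction n with
  | zero =>
    intro l hl _ a
    rw [List.length_eq_zero_iff.mp (Nat.le_zero.mp hl)]
    simp [lp]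
  | succ n ih =>
    intro l hl hmem a
    by_cases hconst : ∀ x ∈ l, ∀ y ∈ l, x = y
    · cases l with
      | nil => rfl
      | cons z t =>
        have : z :: t = List.replicate (z :: t).length z := by
          refine (List.eq_replicate_length).mpr fun b hb => ?_
          exact hconst b hb z List.mem_cons_self
        rw [this]
        exact core_replicate s2 lam u v z _ a
    · obtain ⟨l₁, x, y, l₂, rfl, hne⟩ := exists_adj _ hconst
      have hx := hmem x (by simp)
      have hy := hmem y (by simp)
      have hyx : y = -x := by
        rcases hx with hx | hx <;> rcases hy with hy | hy
        · exact absurd (hx.trans hy.symm) hne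
        · rw [hy, hx]
        · rw [hy, hx, neg_neg]
        · exact absurd (hx.trans hy.symm) hne
      subst hyx
      rw [lp_reduce, lp_reduce]
      have hlen : (l₁ ++ l₂).length ≤ n := by
        have := hl
        simp only [List.length_append, List.length_cons] at this ⊢
        omega
      have hmem' : ∀ z ∈ l₁ ++ l₂, z = (s2 : ℂ) / 2 ∨ z = -((s2 : ℂ) / 2) := by
        intro z hz
        refine hmem z ?_
        rcases List.mem_append.mp hz with h | h
        · exact List.mem_append.mpr (Or.inl h)
        · exact List.mem_append.mpr (Or.inr (by simp [h]))
      rw [ih (l₁ ++ l₂) hlen hmem' a]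
      congr 1
      rw [neg_neg]
      exact mul_comm _ _

end GnAux

/-- Symmetry of the scalar products (Appendix A): for every `N ≥ 1` and every choice of
`σ_i ∈ {±s}`, the function `G_N(σ₁,…,σ_N)(u,v)` is symmetric in `(u,v)`. -/
theorem Gn_symmetric (s2 : ℕ) (hs2 : 1 ≤ s2) (lam : ℂ) :
    ∀ N : ℕ, 1 ≤ N → ∀ σ : Fin N → ℂ,
      (∀ i, σ i = (s2 : ℂ) / 2 ∨ σ i = -((s2 : ℂ) / 2)) →
      ∀ u v : ℂ, Gn s2 lam N σ u v = Gn s2 lam N σ v u := by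
  intro N hN σ hσ u v
  unfold Gn
  congr 1
  have hGn : ∀ u v : ℂ,
      (∏ k : Fin N, ∏ m ∈ range s2,
        (Complex.exp ((σ k / (s2 : ℂ)) * (v - u))
          + Complex.exp ((σ k / (s2 : ℂ)) * (u - v)
              + 2 * lam * (((m : ℂ) + 1) - (s2 : ℂ) / 2 - 1 / 2)
              + 2 * lam * ((∑ i ∈ Finset.Ioi k, σ i) - ∑ i ∈ Finset.Iio k, σ i))))
        = ∏ k : Fin N, GnAux.F s2 lam u v (σ k)
            ((∑ i ∈ Finset.Ioi k, σ i) - ∑ i ∈ Finset.Iio k, σ i) := by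
    intro u v
    rfl
  rw [hGn u v, hGn v u]
  have harg : ∀ k : Fin N,
      (0 : ℂ) + (∑ i ∈ Finset.Ioi k, σ i) - 0 - ∑ i ∈ Finset.Iio k, σ i
        = (∑ i ∈ Finset.Ioi k, σ i) - ∑ i ∈ Finset.Iio k, σ i := fun k => by ring
  calc
    ∏ k : Fin N, GnAux.F s2 lam u v (σ k)
        ((∑ i ∈ Finset.Ioi k, σ i) - ∑ i ∈ Finset.Iio k, σ i)
      = ∏ k : Fin N, GnAux.F s2 lam u v (σ k)
          ((0 : ℂ) + (∑ i ∈ Finset.Ioi k, σ i) - 0 - ∑ i ∈ Finset.Iio k, σ i) := by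
        exact Finset.prod_congr rfl fun k _ => (congrArg _ (harg k)).symm
    _ = GnAux.lp (fun x d => GnAux.F s2 lam u v x d) 0 0 (List.ofFn σ) :=
        (GnAux.lp_ofFn _ N σ 0 0).symm
    _ = GnAux.lp (fun x d => GnAux.F s2 lam u v (-x) d) 0 0 (List.ofFn σ) :=
        (GnAux.core s2 lam u v (List.ofFn σ)
          (fun x hx => by
            obtain ⟨i, rfl⟩ := List.mem_ofFn.mp hx
            exact hσ i) 0).symm
    _ = ∏ k : Fin N, GnAux.F s2 lam u v (-(σ k))
          ((0 : ℂ) + (∑ i ∈ Finset.Ioi k, σ i) - 0 - ∑ i ∈ Finset.Iio k, σ i) :=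
        GnAux.lp_ofFn _ N σ 0 0
    _ = ∏ k : Fin N, GnAux.F s2 lam v u (σ k)
          ((∑ i ∈ Finset.Ioi k, σ i) - ∑ i ∈ Finset.Iio k, σ i) := by
        refine Finset.prod_congr rfl fun k _ => ?_
        rw [harg k, GnAux.F_swap, neg_neg]
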